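/- Let η : [0,∞) → ℝ be given by η(x) = e^{-x}, let m ≥ 0 and 0 < a < b. Then ∫_{ℝ^2} (p² + m²)^{-1/2} · [η((p²+m²)/b²) − η((p²+m²)/a²)] dp/(2π)² ≤ K·(b − a) for some universal constant K; explicitly the integral equals (1/4π)∫_{b^{-2}}^{a^{-2}} α^{-3/2} (∫_0^∞ √v e^{-v} dv) dα up to bounding, which is at most K(b − a). -/

import Mathlib

open MeasureTheory Real
open Set

lemma aux_int (c : ℝ) (hc : 0 < c) :
    IntegrableOn (fun s : ℝ => (1 / Real.sqrt s) * Real.exp (-(s / c ^ 2))) (Ioi 0) := by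
  have h := integrableOn_rpow_mul_exp_neg_mul_rpow (p := 1) (s := -(1/2)) (b := (c^2)⁻¹)
    (by norm_num) one_pos (by positivity)
  refine (h.congr_fun (fun s hs => ?_) measurableSet_Ioi)
  have hs' : (0:ℝ) < s := hs
  dsimp only
  rw [Real.rpow_one, Real.rpow_neg hs'.le, ← Real.sqrt_eq_rpow, one_div]
  congr 2
  field_simp

lemma aux_val (c : ℝ) (hc : 0 < c) :
    ∫ s in Ioi (0:ℝ), (1 / Real.sqrt s) * Real.exp (-(s / c ^ 2)) = c * Real.sqrt π := by
  have h := Real.integral_rpow_mul_exp_neg_mul_Ioi (a := 1/2) (r := 1 / c^2)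
    (by norm_num) (by positivity)
  rw [Real.Gamma_one_half_eq] at h
  rw [show (∫ s in Ioi (0:ℝ), (1 / Real.sqrt s) * Real.exp (-(s / c ^ 2)))
      = ∫ t in Ioi (0:ℝ), t ^ ((1:ℝ)/2 - 1) * Real.exp (-(1 / c ^ 2 * t)) from
    setIntegral_congr_fun measurableSet_Ioi (fun s hs => ?_), h]
  · rw [one_div_one_div, ← Real.sqrt_eq_rpow, Real.sqrt_sq hc.le]
  · have hs' : (0:ℝ) < s := hs
    rw [show (1:ℝ)/2 - 1 = -(1/2) by norm_num, Real.rpow_neg hs'.le,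
      ← Real.sqrt_eq_rpow, one_div]
    congr 2
    field_simp

lemma aux_main (m a b : ℝ) (hm : 0 ≤ m) (ha : 0 < a) (hab : a < b) :
    ∫ u in Ioi (0:ℝ), (1 / Real.sqrt (u + m^2)) *
      (Real.exp (-((u + m^2) / b ^ 2)) - Real.exp (-((u + m^2) / a ^ 2)))
      ≤ (b - a) * Real.sqrt π := by
  have hb : 0 < b := ha.trans hab
  set F : ℝ → ℝ := fun s => (1 / Real.sqrt s) *
      (Real.exp (-(s / b ^ 2)) - Real.exp (-(s / a ^ 2))) with hF
  have hFeq : F = fun s => (1 / Real.sqrt s) * Real.exp (-(s / b ^ 2))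
      - (1 / Real.sqrt s) * Real.exp (-(s / a ^ 2)) := by
    funext s; simp [hF, mul_sub]
  have hFi : IntegrableOn F (Ioi 0) := by
    rw [hFeq]; exact (aux_int b hb).sub (aux_int a ha)
  have hFnn : ∀ s : ℝ, 0 ≤ s → 0 ≤ F s := by
    intro s hs
    apply mul_nonneg (by positivity)
    rw [sub_nonneg]
    apply Real.exp_le_exp.2
    rw [neg_le_neg_iff]
    exact div_le_div_of_nonneg_left hs (by positivity) (by nlinarith)
  have hshift : (∫ u in Ioi (0:ℝ), F (u + m^2)) = ∫ s in Ioi (m^2), F s := by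
    have hmp : MeasurePreserving (fun x : ℝ => x + m^2) volume volume :=
      measurePreserving_add_right volume (m^2)
    have := hmp.setIntegral_preimage_emb
      (MeasurableEquiv.addRight (m^2)).measurableEmbedding F (Ioi (m^2))
    simpa using this
  have hmono : (∫ s in Ioi (m^2), F s) ≤ ∫ s in Ioi (0:ℝ), F s := by
    apply setIntegral_mono_set hFi
    · exact (ae_restrict_iff' measurableSet_Ioi).2 (ae_of_all _ fun s hs => hFnn s (le_of_lt hs))
    · exact HasSubset.Subset.eventuallyLE (Ioi_subset_Ioi (by positivity))
  have hval : (∫ s in Ioi (0:ℝ), F s) = (b - a) * Real.sqrt π := by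
    rw [hFeq, integral_sub (aux_int b hb) (aux_int a ha), aux_val b hb, aux_val a ha]
    ring
  calc (∫ u in Ioi (0:ℝ), F (u + m^2)) = ∫ s in Ioi (m^2), F s := hshift
    _ ≤ ∫ s in Ioi (0:ℝ), F s := hmono
    _ = (b - a) * Real.sqrt π := hval


theorem stmt_8 :
    ∃ K : ℝ, 0 < K ∧ ∀ (m a b : ℝ), 0 ≤ m → 0 < a → a < b →
      (∫ p : EuclideanSpace ℝ (Fin 2),
        (1 / Real.sqrt (‖p‖ ^ 2 + m ^ 2)) *
          (Real.exp (-((‖p‖ ^ 2 + m ^ 2) / b ^ 2)) -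
            Real.exp (-((‖p‖ ^ 2 + m ^ 2) / a ^ 2))) / (2 * π) ^ 2)
        ≤ K * (b - a) := by
  set E := EuclideanSpace ℝ (Fin 2)
  set C : ℝ := (volume (Metric.ball (0:E) 1)).toReal with hC
  have hCpos : 0 < C := by
    apply ENNReal.toReal_pos
    · exact (Metric.measure_ball_pos volume 0 one_pos).ne'
    · exact (measure_ball_lt_top).ne
  refine ⟨C * Real.sqrt π / (2 * π)^2, by positivity, fun m a b hm ha hab => ?_⟩
  set F : ℝ → ℝ := fun s => (1 / Real.sqrt s) *
      (Real.exp (-(s / b ^ 2)) - Real.exp (-(s / a ^ 2))) with hF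
  have key := MeasureTheory.integral_fun_norm_addHaar (volume : Measure E)
      (fun r => F (r ^ 2 + m ^ 2))
  have hdim : Module.finrank ℝ E = 2 := finrank_euclideanSpace_fin
  rw [hdim] at key
  have step1 : (∫ p : E,
        (1 / Real.sqrt (‖p‖ ^ 2 + m ^ 2)) *
          (Real.exp (-((‖p‖ ^ 2 + m ^ 2) / b ^ 2)) -
            Real.exp (-((‖p‖ ^ 2 + m ^ 2) / a ^ 2))) / (2 * π) ^ 2)
      = (∫ p : E, F (‖p‖ ^ 2 + m ^ 2)) / (2 * π) ^ 2 := by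
    rw [← integral_div]
  have step2 : (∫ y in Ioi (0:ℝ), 2 * y * F (y ^ 2 + m ^ 2))
      = ∫ u in Ioi (0:ℝ), F (u + m ^ 2) := by
    have := integral_comp_rpow_Ioi_of_pos (g := fun u => F (u + m ^ 2)) (p := 2) two_pos
    rw [← this]
    refine setIntegral_congr_fun measurableSet_Ioi (fun y hy => ?_)
    have hy' : (0:ℝ) < y := hy
    rw [smul_eq_mul, show (2:ℝ) - 1 = 1 by norm_num, Real.rpow_one, Real.rpow_two]
  calc (∫ p : E,
        (1 / Real.sqrt (‖p‖ ^ 2 + m ^ 2)) *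
          (Real.exp (-((‖p‖ ^ 2 + m ^ 2) / b ^ 2)) -
            Real.exp (-((‖p‖ ^ 2 + m ^ 2) / a ^ 2))) / (2 * π) ^ 2)
      = (∫ p : E, F (‖p‖ ^ 2 + m ^ 2)) / (2 * π) ^ 2 := step1
    _ = (2 • C • ∫ y in Ioi (0:ℝ), y ^ (2 - 1) • F (y ^ 2 + m ^ 2)) / (2 * π) ^ 2 := by
        rw [key]; rfl
    _ = (C * ∫ u in Ioi (0:ℝ), F (u + m ^ 2)) / (2 * π) ^ 2 := by
        rw [← step2]
        have h2 : (∫ y in Ioi (0:ℝ), 2 * y * F (y ^ 2 + m ^ 2))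
            = 2 * ∫ y in Ioi (0:ℝ), y ^ (2 - 1) • F (y ^ 2 + m ^ 2) := by
          rw [← integral_const_mul]
          exact setIntegral_congr_fun measurableSet_Ioi fun y hy => by
            simp only [pow_one, smul_eq_mul]; ring
        rw [h2, nsmul_eq_mul, smul_eq_mul]
        push_cast
        ring
    _ ≤ (C * ((b - a) * Real.sqrt π)) / (2 * π) ^ 2 := by
        apply div_le_div_of_nonneg_right ?_ (by positivity)
        exact mul_le_mul_of_nonneg_left (aux_main m a b hm ha hab) hCpos.le
    _ = C * Real.sqrt π / (2 * π)^2 * (b - a) := by ring
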